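/- arXiv:2412.16787 — 5 statements merged into one kernel-verified Lean document; each statement's English description precedes it below -/
import Mathlib

section
/- A-posteriori energy drift bound for the true Hamiltonian: Let Ω ⊂ ℝ^{2d} be compact, Δt > 0, and let ψ̄ : [0,Δt] × Ω → Ω satisfy ψ̄(0,x) = x, be differentiable in time, and map Ω into Ω for every t ∈ [0,Δt]. Let H : ℝ^{2d} → ℝ be continuously differentiable with Lipschitz constant at most C on Ω, and suppose the residual bound ‖∂_t ψ̄_t(x) − J ∇H(ψ̄_t(x))‖₂ ≤ ε₂ holds for all t ∈ [0,Δt] and x ∈ Ω. Define the long-time extension ψ(t,x) = ψ̄_{t − Δt⌊t/Δt⌋}((ψ̄_{Δt})^{⌊t/Δt⌋}(x)) for t ≥ 0. Then for every t ≥ 0 and x ∈ Ω, |H(ψ(t,x)) − H(x)| ≤ C ε₂ t. -/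
open scoped RealInnerProductSpace

noncomputable section

/-- Phase-space factor `ℝ^d`. -/
abbrev Vec (d : ℕ) := EuclideanSpace ℝ (Fin d)

/-- Phase space `ℝ^{2d}` split as positions and momenta. -/
abbrev Phase (d : ℕ) := Vec d × Vec d

/-- Gradient with respect to the position variable. -/
def gradQ {d : ℕ} (H : Phase d → ℝ) (x : Phase d) : Vec d :=
  gradient (fun q => H (q, x.2)) x.1

/-- Gradient with respect to the momentum variable. -/
def gradP {d : ℕ} (H : Phase d → ℝ) (x : Phase d) : Vec d :=
  gradient (fun p => H (x.1, p)) x.2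

/-- `J ∇H (q,p) = (∇ₚH(q,p), −∇_qH(q,p))`. -/
def JgradH {d : ℕ} (H : Phase d → ℝ) (x : Phase d) : Phase d :=
  (gradP H x, - gradQ H x)

/-- The Euclidean (`ℓ²`) norm on `ℝ^{2d} = ℝ^d × ℝ^d`. -/
def l2norm {d : ℕ} (x : Phase d) : ℝ := Real.sqrt (‖x.1‖ ^ 2 + ‖x.2‖ ^ 2)


lemma l2norm_nonneg {d : ℕ} (x : Phase d) : 0 ≤ l2norm x := Real.sqrt_nonneg _

lemma fderiv_apply_eq {d : ℕ} (H : Phase d → ℝ) (hH : ContDiff ℝ 1 H) (y : Phase d)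
    (v : Phase d) :
    fderiv ℝ H y v = ⟪gradQ H y, v.1⟫ + ⟪gradP H y, v.2⟫ := by
  have hdiff : DifferentiableAt ℝ H y := (hH.differentiable one_ne_zero) y
  have hq : HasFDerivAt (fun q : Vec d => H (q, y.2))
      ((fderiv ℝ H y).comp (ContinuousLinearMap.inl ℝ (Vec d) (Vec d))) y.1 := by
    have := hdiff.hasFDerivAt.comp y.1 (hasFDerivAt_prodMk_left (𝕜 := ℝ) y.1 y.2)
    exact this
  have hp : HasFDerivAt (fun p : Vec d => H (y.1, p))
      ((fderiv ℝ H y).comp (ContinuousLinearMap.inr ℝ (Vec d) (Vec d))) y.2 := by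
    have := hdiff.hasFDerivAt.comp y.2 (hasFDerivAt_prodMk_right (𝕜 := ℝ) y.1 y.2)
    exact this
  have e1 : ⟪gradQ H y, v.1⟫ = fderiv ℝ H y (v.1, 0) := by
    rw [gradQ, gradient, InnerProductSpace.toDual_symm_apply, hq.fderiv]
    rfl
  have e2 : ⟪gradP H y, v.2⟫ = fderiv ℝ H y (0, v.2) := by
    rw [gradP, gradient, InnerProductSpace.toDual_symm_apply, hp.fderiv]
    rfl
  rw [e1, e2, ← map_add]
  congr 1
  exact (Prod.ext (by simp) (by simp)).symm

lemma l2_cs {d : ℕ} (a b : Phase d) :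
    ‖a.1‖ * ‖b.1‖ + ‖a.2‖ * ‖b.2‖ ≤ l2norm a * l2norm b := by
  have h1 : ‖a.1‖ * ‖b.1‖ + ‖a.2‖ * ‖b.2‖
      ≤ Real.sqrt ((‖a.1‖ ^ 2 + ‖a.2‖ ^ 2) * (‖b.1‖ ^ 2 + ‖b.2‖ ^ 2)) := by
    rw [show (‖a.1‖ ^ 2 + ‖a.2‖ ^ 2) * (‖b.1‖ ^ 2 + ‖b.2‖ ^ 2)
        = (‖a.1‖ * ‖b.1‖ + ‖a.2‖ * ‖b.2‖) ^ 2 + (‖a.1‖ * ‖b.2‖ - ‖a.2‖ * ‖b.1‖) ^ 2 by ring]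
    calc ‖a.1‖ * ‖b.1‖ + ‖a.2‖ * ‖b.2‖
        ≤ Real.sqrt ((‖a.1‖ * ‖b.1‖ + ‖a.2‖ * ‖b.2‖) ^ 2) := by
          rw [Real.sqrt_sq_eq_abs]; exact le_abs_self _
      _ ≤ _ := Real.sqrt_le_sqrt (by nlinarith [sq_nonneg (‖a.1‖ * ‖b.2‖ - ‖a.2‖ * ‖b.1‖)])
  rw [l2norm, l2norm, ← Real.sqrt_mul (by positivity)]
  exact h1

lemma fderiv_bound {d : ℕ} (H : Phase d → ℝ) (hH : ContDiff ℝ 1 H)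
    {Ω : Set (Phase d)} {C ε₂ : ℝ} (hLip : ∀ x ∈ Ω, l2norm (gradQ H x, gradP H x) ≤ C)
    {y : Phase d} (hy : y ∈ Ω) {v : Phase d} (hv : l2norm (v - JgradH H y) ≤ ε₂) :
    |fderiv ℝ H y v| ≤ C * ε₂ := by
  set w := v - JgradH H y with hw
  have hz : fderiv ℝ H y (JgradH H y) = 0 := by
    rw [fderiv_apply_eq H hH]
    show ⟪gradQ H y, gradP H y⟫ + ⟪gradP H y, -gradQ H y⟫ = 0
    rw [inner_neg_right, real_inner_comm]
    ring
  have h1 : fderiv ℝ H y v = fderiv ℝ H y w := by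
    rw [hw, map_sub, hz, sub_zero]
  rw [h1, fderiv_apply_eq H hH]
  have h2 : |⟪gradQ H y, w.1⟫ + ⟪gradP H y, w.2⟫| ≤ |⟪gradQ H y, w.1⟫| + |⟪gradP H y, w.2⟫| :=
    abs_add_le _ _
  have h3 : |⟪gradQ H y, w.1⟫| ≤ ‖gradQ H y‖ * ‖w.1‖ := abs_real_inner_le_norm _ _
  have h4 : |⟪gradP H y, w.2⟫| ≤ ‖gradP H y‖ * ‖w.2‖ := abs_real_inner_le_norm _ _
  have h5 := l2_cs (gradQ H y, gradP H y) w
  have h6 := hLip y hy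
  have h7 := l2norm_nonneg (gradQ H y, gradP H y)
  have h8 := l2norm_nonneg w
  simp only at h5
  nlinarith



/-- **A-posteriori energy drift bound for the true Hamiltonian.**
`ψ̄` is a time-dependent map of `Ω` into itself with `ψ̄(0,·) = id`, differentiable in time
with derivative `D`, whose residual with respect to the Hamiltonian vector field `J∇H` is at
most `ε₂`.  `H` is `C¹` with Lipschitz constant at most `C` on `Ω` (i.e. `‖∇H‖₂ ≤ C` on `Ω`).
Then the long-time extension `ψ(t,x) = ψ̄_{t−Δt⌊t/Δt⌋}((ψ̄_{Δt})^{⌊t/Δt⌋}(x))` drifts in energy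
by at most `C ε₂ t`. -/
theorem aposteriori_true_hamiltonian_drift
    (d : ℕ) (Ω : Set (Phase d)) (hΩ : IsCompact Ω)
    (Δt : ℝ) (hΔt : 0 < Δt)
    (ψb : ℝ → Phase d → Phase d)
    (hψ0 : ∀ x ∈ Ω, ψb 0 x = x)
    (hmap : ∀ t ∈ Set.Icc (0:ℝ) Δt, ∀ x ∈ Ω, ψb t x ∈ Ω)
    (H : Phase d → ℝ) (hH : ContDiff ℝ 1 H)
    (C : ℝ)
    (hLip : ∀ x ∈ Ω, l2norm (gradQ H x, gradP H x) ≤ C)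
    (D : ℝ → Phase d → Phase d)
    (hD : ∀ t ∈ Set.Icc (0:ℝ) Δt, ∀ x ∈ Ω,
      HasDerivWithinAt (fun s => ψb s x) (D t x) (Set.Icc 0 Δt) t)
    (ε₂ : ℝ)
    (hres : ∀ t ∈ Set.Icc (0:ℝ) Δt, ∀ x ∈ Ω,
      l2norm (D t x - JgradH H (ψb t x)) ≤ ε₂) :
    ∀ t ≥ (0:ℝ), ∀ x ∈ Ω,
      |H (ψb (t - Δt * (⌊t / Δt⌋₊ : ℝ)) ((ψb Δt)^[⌊t / Δt⌋₊] x)) - H x| ≤ C * ε₂ * t := by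
  -- one-step bound
  have key : ∀ s ∈ Set.Icc (0:ℝ) Δt, ∀ x ∈ Ω, |H (ψb s x) - H x| ≤ C * ε₂ * s := by
    intro s hs x hx
    have hder : ∀ u ∈ Set.Icc (0:ℝ) Δt,
        HasDerivWithinAt (fun r => H (ψb r x)) (fderiv ℝ H (ψb u x) (D u x))
          (Set.Icc 0 Δt) u := by
      intro u hu
      exact (((hH.differentiable one_ne_zero) (ψb u x)).hasFDerivAt).comp_hasDerivWithinAt u
        (hD u hu x hx)
    have hbound : ∀ u ∈ Set.Icc (0:ℝ) Δt, ‖fderiv ℝ H (ψb u x) (D u x)‖ ≤ C * ε₂ := by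
      intro u hu
      exact fderiv_bound H hH hLip (hmap u hu x hx) (hres u hu x hx)
    have h0 : (0:ℝ) ∈ Set.Icc (0:ℝ) Δt := ⟨le_refl 0, hΔt.le⟩
    have := Convex.norm_image_sub_le_of_norm_hasDerivWithin_le hder hbound
      (convex_Icc 0 Δt) h0 hs
    rw [hψ0 x hx] at this
    simpa [abs_of_nonneg hs.1] using this
  intro t ht x hx
  have h0mem : (0:ℝ) ∈ Set.Icc (0:ℝ) Δt := ⟨le_refl 0, hΔt.le⟩
  have hΔmem : Δt ∈ Set.Icc (0:ℝ) Δt := ⟨hΔt.le, le_refl Δt⟩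
  have hC : 0 ≤ C := (l2norm_nonneg _).trans (hLip x hx)
  have hε : 0 ≤ ε₂ := (l2norm_nonneg _).trans (hres 0 h0mem x hx)
  have hCε : 0 ≤ C * ε₂ := mul_nonneg hC hε
  -- iterates stay in Ω
  have hmem : ∀ n : ℕ, (ψb Δt)^[n] x ∈ Ω := by
    intro n
    induction n with
    | zero => simpa using hx
    | succ n ih =>
      rw [Function.iterate_succ_apply']
      exact hmap Δt hΔmem _ ih
  -- iterated bound
  have hiter : ∀ n : ℕ, |H ((ψb Δt)^[n] x) - H x| ≤ C * ε₂ * (Δt * n) := by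
    intro n
    induction n with
    | zero => simp
    | succ n ih =>
      rw [Function.iterate_succ_apply']
      calc |H (ψb Δt ((ψb Δt)^[n] x)) - H x|
          ≤ |H (ψb Δt ((ψb Δt)^[n] x)) - H ((ψb Δt)^[n] x)| + |H ((ψb Δt)^[n] x) - H x| := by
            have := abs_sub_abs_le_abs_sub (H (ψb Δt ((ψb Δt)^[n] x)) - H x)
              (H ((ψb Δt)^[n] x) - H x)
            exact abs_sub_le _ _ _
        _ ≤ C * ε₂ * Δt + C * ε₂ * (Δt * n) := by
            gcongr
            exact key Δt hΔmem _ (hmem n)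
        _ = C * ε₂ * (Δt * (n + 1 : ℕ)) := by push_cast; ring
  set n := ⌊t / Δt⌋₊ with hn
  set r := t - Δt * (n : ℝ) with hr
  have hr0 : 0 ≤ r := by
    have h1 : (n : ℝ) ≤ t / Δt := Nat.floor_le (div_nonneg ht hΔt.le)
    have : Δt * (n : ℝ) ≤ t := by
      rw [ge_iff_le, ← le_div_iff₀' hΔt] at *
      linarith
    linarith
  have hrΔ : r ≤ Δt := by
    have h1 : t / Δt < (n : ℝ) + 1 := Nat.lt_floor_add_one _
    have : t < Δt * ((n : ℝ) + 1) := by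
      rw [← div_lt_iff₀' hΔt]
      exact h1
    have := this
    rw [hr]
    nlinarith
  have hrmem : r ∈ Set.Icc (0:ℝ) Δt := ⟨hr0, hrΔ⟩
  calc |H (ψb r ((ψb Δt)^[n] x)) - H x|
      ≤ |H (ψb r ((ψb Δt)^[n] x)) - H ((ψb Δt)^[n] x)| + |H ((ψb Δt)^[n] x) - H x| :=
        abs_sub_le _ _ _
    _ ≤ C * ε₂ * r + C * ε₂ * (Δt * n) := by
        gcongr
        · exact key r hrmem _ (hmem n)
        · exact hiter n
    _ = C * ε₂ * t := by rw [hr]; ring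
end
end

section
/- A-posteriori drift bound for the modified Hamiltonian: Let Ω ⊂ ℝ^{2d} be compact, Δt > 0, and let ψ̄ : [0,Δt] × Ω → Ω satisfy ψ̄(0,x) = x and ∂_t ψ̄_t(x) = J ∇_x ℋ̄(t, ψ̄_t(x)) for a continuously differentiable ℋ̄ : [0,Δt] × ℝ^{2d} → ℝ, with ψ̄_t(Ω) ⊆ Ω for every t ∈ [0,Δt]. Let H : ℝ^{2d} → ℝ be continuously differentiable with Lipschitz constant at most C on Ω. Assume |ℋ̄(t,x) − H(x)| ≤ ε₁ and ‖∂_t ψ̄_t(x) − J ∇H(ψ̄_t(x))‖₂ ≤ ε₂ for all t ∈ [0,Δt], x ∈ Ω. Define ψ(t,x) = ψ̄_{t − Δt⌊t/Δt⌋}((ψ̄_{Δt})^{⌊t/Δt⌋}(x)) and ℋ(t,x) = ℋ̄(t − Δt⌊t/Δt⌋, x) for t ≥ 0. Then for every t ≥ 0 and x ∈ Ω, |ℋ(t, ψ(t,x)) − ℋ(0,x)| ≤ 2ε₁ + C ε₂ t. -/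
noncomputable section

lemma inner_gradient {F : Type*} [NormedAddCommGroup F] [InnerProductSpace ℝ F]
    [CompleteSpace F] (f : F → ℝ) (x u : F) :
    @inner ℝ _ _ (gradient f x) u = fderiv ℝ f x u := by
  rw [← InnerProductSpace.toDual_apply_apply, gradient,
    LinearIsometryEquiv.apply_symm_apply]

lemma fderiv_pair_apply {d : ℕ} (H : Phase d → ℝ) (hH : ContDiff ℝ 1 H) (x : Phase d)
    (u v : Vec d) :
    fderiv ℝ H x (u, v) =
      @inner ℝ _ _ (gradQ H x) u + @inner ℝ _ _ (gradP H x) v := by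
  have hd : DifferentiableAt ℝ H x := (hH.differentiable one_ne_zero) x
  have hq : HasFDerivAt (fun q : Vec d => H (q, x.2))
      ((fderiv ℝ H x).comp (ContinuousLinearMap.inl ℝ (Vec d) (Vec d))) x.1 := by
    exact hd.hasFDerivAt.comp x.1 (hasFDerivAt_prodMk_left x.1 x.2)
  have hp : HasFDerivAt (fun p : Vec d => H (x.1, p))
      ((fderiv ℝ H x).comp (ContinuousLinearMap.inr ℝ (Vec d) (Vec d))) x.2 := by
    exact hd.hasFDerivAt.comp x.2 (hasFDerivAt_prodMk_right x.1 x.2)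
  have eq : (u, v) = ((u, 0) : Phase d) + ((0 : Vec d), v) := by simp
  rw [eq, map_add]
  have h1 : @inner ℝ _ _ (gradQ H x) u = fderiv ℝ H x ((u, 0) : Phase d) := by
    rw [gradQ, inner_gradient, hq.fderiv]; rfl
  have h2 : @inner ℝ _ _ (gradP H x) v = fderiv ℝ H x (((0:Vec d), v) : Phase d) := by
    rw [gradP, inner_gradient, hp.fderiv]; rfl
  rw [h1, h2]

lemma cs2 (a b c e : ℝ) (ha : 0 ≤ a) (hb : 0 ≤ b) (hc : 0 ≤ c) (he : 0 ≤ e) :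
    a * b + c * e ≤ Real.sqrt (a ^ 2 + c ^ 2) * Real.sqrt (b ^ 2 + e ^ 2) := by
  have h1 : (a * b + c * e) ^ 2 ≤ (a ^ 2 + c ^ 2) * (b ^ 2 + e ^ 2) := by
    nlinarith [sq_nonneg (a * e - c * b)]
  have h2 : a * b + c * e = Real.sqrt ((a * b + c * e) ^ 2) :=
    (Real.sqrt_sq (by positivity)).symm
  rw [h2, ← Real.sqrt_mul (by positivity)]
  exact Real.sqrt_le_sqrt h1

lemma deriv_bound {d : ℕ} (H Hb : Phase d → ℝ) (hH : ContDiff ℝ 1 H)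
    (y : Phase d) (C ε₂ : ℝ) (hC : l2norm (gradQ H y, gradP H y) ≤ C)
    (hr : l2norm (JgradH Hb y - JgradH H y) ≤ ε₂) :
    |fderiv ℝ H y (JgradH Hb y)| ≤ C * ε₂ := by
  set r : Phase d := JgradH Hb y - JgradH H y with hrdef
  have hsplit : JgradH Hb y = JgradH H y + r := by simp [hrdef]
  have hkey : fderiv ℝ H y (JgradH Hb y) =
      @inner ℝ _ _ (gradQ H y) r.1 + @inner ℝ _ _ (gradP H y) r.2 := by
    rw [hsplit, map_add]
    have h0 : fderiv ℝ H y (JgradH H y) = 0 := by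
      rw [show JgradH H y = ((gradP H y, - gradQ H y) : Phase d) from rfl,
        fderiv_pair_apply H hH, inner_neg_right, real_inner_comm]
      ring
    rw [h0, show (r : Phase d) = (r.1, r.2) from rfl, fderiv_pair_apply H hH]
    ring
  rw [hkey]
  calc |@inner ℝ _ _ (gradQ H y) r.1 + @inner ℝ _ _ (gradP H y) r.2|
      ≤ |@inner ℝ _ _ (gradQ H y) r.1| + |@inner ℝ _ _ (gradP H y) r.2| := abs_add_le _ _
    _ ≤ ‖gradQ H y‖ * ‖r.1‖ + ‖gradP H y‖ * ‖r.2‖ := by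
        gcongr <;> exact abs_real_inner_le_norm _ _
    _ ≤ Real.sqrt (‖gradQ H y‖ ^ 2 + ‖gradP H y‖ ^ 2) *
          Real.sqrt (‖r.1‖ ^ 2 + ‖r.2‖ ^ 2) := by
        apply cs2 <;> exact norm_nonneg _
    _ ≤ C * ε₂ := by
        have h1 : Real.sqrt (‖gradQ H y‖ ^ 2 + ‖gradP H y‖ ^ 2) ≤ C := hC
        have h2 : Real.sqrt (‖r.1‖ ^ 2 + ‖r.2‖ ^ 2) ≤ ε₂ := hr
        have := Real.sqrt_nonneg (‖r.1‖ ^ 2 + ‖r.2‖ ^ 2)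
        have hC0 : 0 ≤ C := le_trans (Real.sqrt_nonneg _) h1
        nlinarith

lemma onestep {d : ℕ} (Ω : Set (Phase d)) (Δt : ℝ) (hΔt : 0 < Δt)
    (ψb : ℝ → Phase d → Phase d)
    (hψ0 : ∀ x ∈ Ω, ψb 0 x = x)
    (hmap : ∀ t ∈ Set.Icc (0:ℝ) Δt, ∀ x ∈ Ω, ψb t x ∈ Ω)
    (Hb : ℝ → Phase d → ℝ)
    (hflow : ∀ t ∈ Set.Icc (0:ℝ) Δt, ∀ x ∈ Ω,
      HasDerivWithinAt (fun s => ψb s x) (JgradH (Hb t) (ψb t x)) (Set.Icc 0 Δt) t)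
    (H : Phase d → ℝ) (hH : ContDiff ℝ 1 H)
    (C : ℝ) (hLip : ∀ x ∈ Ω, l2norm (gradQ H x, gradP H x) ≤ C)
    (ε₂ : ℝ)
    (hres : ∀ t ∈ Set.Icc (0:ℝ) Δt, ∀ x ∈ Ω,
      l2norm (JgradH (Hb t) (ψb t x) - JgradH H (ψb t x)) ≤ ε₂) :
    ∀ x ∈ Ω, ∀ t ∈ Set.Icc (0:ℝ) Δt, |H (ψb t x) - H x| ≤ C * ε₂ * t := by
  intro x hx t ht
  have key := Convex.norm_image_sub_le_of_norm_hasDerivWithin_le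
    (f := fun s => H (ψb s x))
    (f' := fun s => fderiv ℝ H (ψb s x) (JgradH (Hb s) (ψb s x)))
    (s := Set.Icc (0:ℝ) Δt) (C := C * ε₂)
    (fun s hs => ((hH.differentiable one_ne_zero) (ψb s x)).hasFDerivAt.comp_hasDerivWithinAt s
      (hflow s hs x hx))
    (fun s hs => by
      have hy : ψb s x ∈ Ω := hmap s hs x hx
      simpa using deriv_bound H (Hb s) hH (ψb s x) C ε₂ (hLip _ hy) (hres s hs x hx))
    (convex_Icc 0 Δt) (Set.left_mem_Icc.2 hΔt.le) ht
  beta_reduce at key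
  rw [show ‖H (ψb t x) - H (ψb 0 x)‖ = |H (ψb t x) - H (ψb 0 x)| from rfl, hψ0 x hx] at key
  simpa [abs_of_nonneg ht.1] using key

/-- **A-posteriori drift bound for the modified Hamiltonian.**
`ψ̄` is the exact flow (from time `0`) of the time-dependent modified Hamiltonian `ℋ̄`, maps
`Ω` into itself, `|ℋ̄ − H| ≤ ε₁` on `[0,Δt] × Ω`, the residual with respect to `J∇H` is at
most `ε₂`, and `H` is `C¹` with Lipschitz constant at most `C` on `Ω` (i.e. `‖∇H‖₂ ≤ C` on
`Ω`).  Then the extended modified Hamiltonian `ℋ(t,x) = ℋ̄(t − Δt⌊t/Δt⌋, x)` along the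
long-time extension `ψ(t,x) = ψ̄_{t−Δt⌊t/Δt⌋}((ψ̄_{Δt})^{⌊t/Δt⌋}(x))` drifts by at most
`2ε₁ + C ε₂ t`. -/
theorem aposteriori_modified_hamiltonian_drift
    (d : ℕ) (Ω : Set (Phase d)) (hΩ : IsCompact Ω)
    (Δt : ℝ) (hΔt : 0 < Δt)
    (ψb : ℝ → Phase d → Phase d)
    (hψ0 : ∀ x ∈ Ω, ψb 0 x = x)
    (hmap : ∀ t ∈ Set.Icc (0:ℝ) Δt, ∀ x ∈ Ω, ψb t x ∈ Ω)
    (Hb : ℝ → Phase d → ℝ)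
    (hHb : ContDiffOn ℝ 1 (fun z : ℝ × Phase d => Hb z.1 z.2)
      (Set.Icc (0:ℝ) Δt ×ˢ (Set.univ : Set (Phase d))))
    (hflow : ∀ t ∈ Set.Icc (0:ℝ) Δt, ∀ x ∈ Ω,
      HasDerivWithinAt (fun s => ψb s x) (JgradH (Hb t) (ψb t x)) (Set.Icc 0 Δt) t)
    (H : Phase d → ℝ) (hH : ContDiff ℝ 1 H)
    (C : ℝ)
    (hLip : ∀ x ∈ Ω, l2norm (gradQ H x, gradP H x) ≤ C)
    (ε₁ ε₂ : ℝ)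
    (hclose : ∀ t ∈ Set.Icc (0:ℝ) Δt, ∀ x ∈ Ω, |Hb t x - H x| ≤ ε₁)
    (hres : ∀ t ∈ Set.Icc (0:ℝ) Δt, ∀ x ∈ Ω,
      l2norm (JgradH (Hb t) (ψb t x) - JgradH H (ψb t x)) ≤ ε₂) :
    ∀ t ≥ (0:ℝ), ∀ x ∈ Ω,
      |Hb (t - Δt * (⌊t / Δt⌋₊ : ℝ))
          (ψb (t - Δt * (⌊t / Δt⌋₊ : ℝ)) ((ψb Δt)^[⌊t / Δt⌋₊] x))
        - Hb 0 x| ≤ 2 * ε₁ + C * ε₂ * t := by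
  intro t ht x hx
  have hone := onestep Ω Δt hΔt ψb hψ0 hmap Hb hflow H hH C hLip ε₂ hres
  have h0mem : (0:ℝ) ∈ Set.Icc (0:ℝ) Δt := Set.left_mem_Icc.2 hΔt.le
  have hΔmem : Δt ∈ Set.Icc (0:ℝ) Δt := Set.right_mem_Icc.2 hΔt.le
  have hC0 : 0 ≤ C := le_trans (Real.sqrt_nonneg _) (hLip x hx)
  have hε20 : 0 ≤ ε₂ := le_trans (Real.sqrt_nonneg _) (hres 0 h0mem x hx)
  set n : ℕ := ⌊t / Δt⌋₊ with hn
  set s : ℝ := t - Δt * n with hsdef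
  have hnle : Δt * (n : ℝ) ≤ t := by
    have h1 : (n : ℝ) ≤ t / Δt := Nat.floor_le (div_nonneg ht hΔt.le)
    rw [le_div_iff₀ hΔt] at h1
    linarith
  have hlt : t < Δt * ((n : ℝ) + 1) := by
    have h1 : t / Δt < (n : ℝ) + 1 := Nat.lt_floor_add_one (t / Δt)
    rw [div_lt_iff₀ hΔt] at h1
    linarith
  have hsmem : s ∈ Set.Icc (0:ℝ) Δt := ⟨by simp [hsdef]; linarith, by simp [hsdef]; linarith⟩
  have hiter : ∀ m : ℕ, (ψb Δt)^[m] x ∈ Ω ∧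
      |H ((ψb Δt)^[m] x) - H x| ≤ C * ε₂ * (m * Δt) := by
    intro m
    induction m with
    | zero => simpa using hx
    | succ k ih =>
      obtain ⟨hyΩ, hybd⟩ := ih
      rw [Function.iterate_succ_apply']
      refine ⟨hmap Δt hΔmem _ hyΩ, ?_⟩
      have hstep := hone _ hyΩ Δt hΔmem
      calc |H (ψb Δt ((ψb Δt)^[k] x)) - H x|
          ≤ |H (ψb Δt ((ψb Δt)^[k] x)) - H ((ψb Δt)^[k] x)|
            + |H ((ψb Δt)^[k] x) - H x| := abs_sub_le _ _ _
        _ ≤ C * ε₂ * Δt + C * ε₂ * (k * Δt) := add_le_add hstep hybd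
        _ = C * ε₂ * ((k + 1 : ℕ) * Δt) := by push_cast; ring
  obtain ⟨hyΩ, hybd⟩ := hiter n
  set y := (ψb Δt)^[n] x with hy
  have hzΩ : ψb s y ∈ Ω := hmap s hsmem y hyΩ
  have h1 : |Hb s (ψb s y) - H (ψb s y)| ≤ ε₁ := hclose s hsmem _ hzΩ
  have h2 : |H (ψb s y) - H y| ≤ C * ε₂ * s := hone y hyΩ s hsmem
  have h4 : |Hb 0 x - H x| ≤ ε₁ := hclose 0 h0mem x hx
  have habs : |Hb s (ψb s y) - Hb 0 x| ≤
      |Hb s (ψb s y) - H (ψb s y)| + |H (ψb s y) - H y| + |H y - H x| + |H x - Hb 0 x| := by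
    have := abs_add_le (Hb s (ψb s y) - H (ψb s y)) (H (ψb s y) - H y)
    have := abs_add_le (Hb s (ψb s y) - H y) (H y - H x)
    have := abs_add_le (Hb s (ψb s y) - H x) (H x - Hb 0 x)
    calc |Hb s (ψb s y) - Hb 0 x|
        = |(Hb s (ψb s y) - H (ψb s y)) + (H (ψb s y) - H y) + (H y - H x) + (H x - Hb 0 x)| := by ring_nf
      _ ≤ _ := by
          refine (abs_add_le _ _).trans (add_le_add ?_ le_rfl)
          refine (abs_add_le _ _).trans (add_le_add ?_ le_rfl)
          exact abs_add_le _ _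
  have hfinal : |Hb s (ψb s y) - Hb 0 x| ≤ ε₁ + C * ε₂ * s + C * ε₂ * (n * Δt) + ε₁ := by
    refine habs.trans ?_
    exact add_le_add (add_le_add (add_le_add h1 h2) hybd)
      (by rw [abs_sub_comm]; exact h4)
  have hteq : C * ε₂ * s + C * ε₂ * ((n:ℝ) * Δt) = C * ε₂ * t := by
    rw [hsdef]; ring
  calc |Hb s (ψb s y) - Hb 0 x| ≤ ε₁ + C * ε₂ * s + C * ε₂ * (n * Δt) + ε₁ := hfinal
    _ = 2 * ε₁ + C * ε₂ * t := by rw [hsdef]; ring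
end
end

section
/- The momentum layer is an exact Hamiltonian flow: Let V_p : ℝ × ℝ^d → ℝ be twice continuously differentiable, and define the map φ_{p,t}(q,p) = (q + (∇_p V_p(t,p) − ∇_p V_p(0,p)), p). Then φ_{p,0} is the identity on ℝ^{2d}, and for every (q₀,p₀) ∈ ℝ^{2d} and t ∈ ℝ, ∂_t φ_{p,t}(q₀,p₀) = J ∇_x H_p(t, φ_{p,t}(q₀,p₀)), where H_p(t,(q,p)) = ∂_t V_p(t,p). -/
noncomputable section

/-- Momentum layer `φ_{p,t}(q,p) = (q + (∇_p V(t,p) − ∇_p V(0,p)), p)`. -/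
def layerP {d : ℕ} (V : ℝ → Vec d → ℝ) (t : ℝ) (x : Phase d) : Phase d :=
  (x.1 + (gradient (V t) x.2 - gradient (V 0) x.2), x.2)

/-- **The momentum layer is an exact Hamiltonian flow.**
If `V_p` is `C²`, then `φ_{p,0} = id` and `∂ₜ φ_{p,t}(q₀,p₀) = J∇ₓ H_p(t, φ_{p,t}(q₀,p₀))`
where `H_p(t,(q,p)) = ∂ₜ V_p(t,p)`. -/
theorem momentum_layer_is_hamiltonian_flow
    (d : ℕ) (Vp : ℝ → Vec d → ℝ)
    (hVp : ContDiff ℝ 2 (fun z : ℝ × Vec d => Vp z.1 z.2)) :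
    (∀ x : Phase d, layerP Vp 0 x = x) ∧
    (∀ (x : Phase d) (t : ℝ),
      HasDerivAt (fun s => layerP Vp s x)
        (JgradH (fun y : Phase d => deriv (fun s => Vp s y.2) t) (layerP Vp t x)) t) := by
  constructor
  · intro x
    simp [layerP]
  · intro x t
    set F : ℝ × Vec d → ℝ := fun z => Vp z.1 z.2 with hF
    have hDiff : Differentiable ℝ F := hVp.differentiable (by norm_num)
    have hD1 : ContDiff ℝ 1 (fderiv ℝ F) := hVp.fderiv_right (by norm_num)
    have hDd : Differentiable ℝ (fderiv ℝ F) := hD1.differentiable (by norm_num)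
    set p := x.2 with hp
    set B := fderiv ℝ (fderiv ℝ F) (t, p) with hB
    have hsymm : ∀ v w, B v w = B w v :=
      second_derivative_symmetric (fun y => (hDiff y).hasFDerivAt) (hDd _).hasFDerivAt
    -- partial fderiv in the momentum variable
    have hpart : ∀ (s : ℝ) (q : Vec d),
        HasFDerivAt (Vp s)
          ((fderiv ℝ F (s, q)).comp (ContinuousLinearMap.inr ℝ ℝ (Vec d))) q := by
      intro s q
      exact (hDiff (s, q)).hasFDerivAt.comp q (hasFDerivAt_prodMk_right s q)
    set E := (InnerProductSpace.toDual ℝ (Vec d)).symm with hE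
    have hg_eq : ∀ s : ℝ, gradient (Vp s) p
        = E ((fderiv ℝ F (s, p)).comp (ContinuousLinearMap.inr ℝ ℝ (Vec d))) := by
      intro s
      rw [gradient, (hpart s p).fderiv]
    -- derivative in t of the full fderiv along s ↦ (s,p)
    have h1 : HasDerivAt (fun s : ℝ => fderiv ℝ F (s, p)) (B (1, 0)) t :=
      (hDd (t, p)).hasFDerivAt.comp_hasDerivAt t
        ((hasDerivAt_id t).prodMk (hasDerivAt_const t p))
    set w : Vec d := E ((B (1, 0)).comp (ContinuousLinearMap.inr ℝ ℝ (Vec d))) with hw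
    -- the continuous linear map T ↦ E (T ∘ inr)
    set Φ : ((ℝ × Vec d) →L[ℝ] ℝ) →L[ℝ] Vec d :=
      (show ((Vec d) →L[ℝ] ℝ) →L[ℝ] Vec d from
        E.toContinuousLinearEquiv.toContinuousLinearMap).comp
        ((ContinuousLinearMap.compL ℝ (Vec d) (ℝ × Vec d) ℝ).flip
          (ContinuousLinearMap.inr ℝ ℝ (Vec d))) with hΦ
    have hΦ_apply : ∀ T : (ℝ × Vec d) →L[ℝ] ℝ,
        Φ T = E (T.comp (ContinuousLinearMap.inr ℝ ℝ (Vec d))) := fun T => rfl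
    have hg : HasDerivAt (fun s => gradient (Vp s) p) w t := by
      have h2 : HasDerivAt (fun s : ℝ => Φ (fderiv ℝ F (s, p))) (Φ (B (1, 0))) t :=
        Φ.hasFDerivAt.comp_hasDerivAt t h1
      have hfun : (fun s : ℝ => gradient (Vp s) p) = fun s => Φ (fderiv ℝ F (s, p)) :=
        funext fun s => by rw [hg_eq s, hΦ_apply]
      rw [hfun, hw, ← hΦ_apply]
      exact h2
    -- time-derivative of Vp at each point
    have hderiv : ∀ v : Vec d,
        HasDerivAt (fun s => Vp s v) (fderiv ℝ F (t, v) (1, 0)) t := fun v => by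
      have := (hDiff (t, v)).hasFDerivAt.comp_hasDerivAt t
        ((hasDerivAt_id t).prodMk (hasDerivAt_const t v))
      exact this
    -- compute gradP of the Hamiltonian
    have hgradP : gradient (fun v : Vec d => deriv (fun s => Vp s v) t) p = w := by
      have hfun : (fun v : Vec d => deriv (fun s => Vp s v) t)
          = fun v => fderiv ℝ F (t, v) (1, 0) := funext fun v => (hderiv v).deriv
      have hDer : HasFDerivAt (fun v : Vec d => fderiv ℝ F (t, v))
          (B.comp (ContinuousLinearMap.inr ℝ ℝ (Vec d))) p :=
        (hDd (t, p)).hasFDerivAt.comp p (hasFDerivAt_prodMk_right t p)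
      have hEval : HasFDerivAt (fun v : Vec d => fderiv ℝ F (t, v) ((1 : ℝ), (0 : Vec d)))
          ((ContinuousLinearMap.apply ℝ ℝ ((1 : ℝ), (0 : Vec d))).comp
            (B.comp (ContinuousLinearMap.inr ℝ ℝ (Vec d)))) p :=
        (ContinuousLinearMap.apply ℝ ℝ ((1 : ℝ), (0 : Vec d))).hasFDerivAt.comp p hDer
      rw [hfun, gradient, hEval.fderiv, hw]
      congr 1
      ext v
      simp only [ContinuousLinearMap.coe_comp', Function.comp_apply,
        ContinuousLinearMap.apply_apply, ContinuousLinearMap.inr_apply]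
      exact hsymm (0, v) (1, 0)
    -- compute gradQ of the Hamiltonian : it's a constant function of q
    have hgradQ : ∀ q : Vec d,
        gradient (fun _ : Vec d => deriv (fun s => Vp s p) t) q = 0 := fun q =>
      gradient_const q _
    -- assemble
    have hfirst : HasDerivAt
        (fun s => x.1 + (gradient (Vp s) p - gradient (Vp 0) p)) w t :=
      (hg.sub_const _).const_add _
    have hsecond : HasDerivAt (fun _ : ℝ => p) (0 : Vec d) t := hasDerivAt_const _ _
    have hmain := hfirst.prodMk hsecond
    have hJ : JgradH (fun y : Phase d => deriv (fun s => Vp s y.2) t) (layerP Vp t x)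
        = (w, (0 : Vec d)) := by
      unfold JgradH gradP gradQ layerP
      simp only
      rw [hgradP, hgradQ, neg_zero]
    rw [show (fun s => layerP Vp s x)
        = fun s => (x.1 + (gradient (Vp s) p - gradient (Vp 0) p), p) from rfl, hJ]
    exact hmain
end
end

section
/- Hamiltonian of a SympFlow pair layer: Let V_q, V_p : ℝ × ℝ^d → ℝ be twice continuously differentiable, and define φ_{q,t}(q,p) = (q, p − (∇_q V_q(t,q) − ∇_q V_q(0,q))) and φ_{p,t}(q,p) = (q + (∇_p V_p(t,p) − ∇_p V_p(0,p)), p). Then the composition ψ_t = φ_{p,t} ∘ φ_{q,t} satisfies ψ_0 = id and ∂_t ψ_t(x) = J ∇_x H(t, ψ_t(x)) for all t ∈ ℝ and x ∈ ℝ^{2d}, where H(t,(q,p)) = ∂_t V_p(t,p) + ∂_t V_q(t, q − (∇_p V_p(t,p) − ∇_p V_p(0,p))). -/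
noncomputable section

/-- Position layer `φ_{q,t}(q,p) = (q, p − (∇_q V(t,q) − ∇_q V(0,q)))`. -/
def layerQ {d : ℕ} (V : ℝ → Vec d → ℝ) (t : ℝ) (x : Phase d) : Phase d :=
  (x.1, x.2 - (gradient (V t) x.1 - gradient (V 0) x.1))

open ContinuousLinearMap InnerProductSpace RealInnerProductSpace

/-- `Kmap l = (toDual).symm (l ∘L inr)` -/
def Kmap (d : ℕ) : ((ℝ × Vec d) →L[ℝ] ℝ) →L[ℝ] Vec d :=
  ((InnerProductSpace.toDual ℝ (Vec d)).symm.toContinuousLinearMap).comp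
    ((ContinuousLinearMap.compL ℝ (Vec d) (ℝ × Vec d) ℝ).flip (ContinuousLinearMap.inr ℝ ℝ (Vec d)))

lemma inner_Kmap {d : ℕ} (l : (ℝ × Vec d) →L[ℝ] ℝ) (v : Vec d) :
    ⟪Kmap d l, v⟫_ℝ = l (0, v) := by
  simp [Kmap, InnerProductSpace.toDual_symm_apply]

lemma toDual_Kmap {d : ℕ} (l : (ℝ × Vec d) →L[ℝ] ℝ) :
    InnerProductSpace.toDual ℝ (Vec d) (Kmap d l) = l.comp (ContinuousLinearMap.inr ℝ ℝ (Vec d)) := by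
  have : Kmap d l = (InnerProductSpace.toDual ℝ (Vec d)).symm
      (l.comp (ContinuousLinearMap.inr ℝ ℝ (Vec d))) := by
    simp [Kmap]
  rw [this, LinearIsometryEquiv.apply_symm_apply]

lemma hasGradientAt_Kmap {d : ℕ} {f : Vec d → ℝ} {l : (ℝ × Vec d) →L[ℝ] ℝ} {x : Vec d}
    (h : HasFDerivAt f (l.comp (ContinuousLinearMap.inr ℝ ℝ (Vec d))) x) :
    HasGradientAt f (Kmap d l) x := by
  rw [hasGradientAt_iff_hasFDerivAt, toDual_Kmap]
  exact h

section SliceLemmas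

variable {d : ℕ} {V : ℝ → Vec d → ℝ}

lemma hasGradientAt_slice (hV : ContDiff ℝ 2 (fun z : ℝ × Vec d => V z.1 z.2))
    (s : ℝ) (w : Vec d) :
    HasGradientAt (V s)
      (Kmap d (fderiv ℝ (fun z : ℝ × Vec d => V z.1 z.2) (s, w))) w := by
  apply hasGradientAt_Kmap
  exact ((hV.differentiable (by norm_num) (s, w)).hasFDerivAt).comp w
    (hasFDerivAt_prodMk_right s w)

lemma grad_slice_eq (hV : ContDiff ℝ 2 (fun z : ℝ × Vec d => V z.1 z.2))
    (s : ℝ) (w : Vec d) :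
    gradient (V s) w = Kmap d (fderiv ℝ (fun z : ℝ × Vec d => V z.1 z.2) (s, w)) :=
  (hasGradientAt_slice hV s w).gradient

lemma hasDerivAt_slice (hV : ContDiff ℝ 2 (fun z : ℝ × Vec d => V z.1 z.2))
    (s : ℝ) (w : Vec d) :
    HasDerivAt (fun r => V r w)
      (fderiv ℝ (fun z : ℝ × Vec d => V z.1 z.2) (s, w) (1, 0)) s :=
  by
    have h := (hasDerivAt_id s).prodMk (hasDerivAt_const s w)
    simpa [Function.comp_def] using
      ((hV.differentiable (by norm_num) (s, w)).hasFDerivAt).comp_hasDerivAt s h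

lemma deriv_slice_eq (hV : ContDiff ℝ 2 (fun z : ℝ × Vec d => V z.1 z.2))
    (s : ℝ) (w : Vec d) :
    deriv (fun r => V r w) s = fderiv ℝ (fun z : ℝ × Vec d => V z.1 z.2) (s, w) (1, 0) :=
  (hasDerivAt_slice hV s w).deriv

lemma hasFDerivAt_A (hV : ContDiff ℝ 2 (fun z : ℝ × Vec d => V z.1 z.2)) (z : ℝ × Vec d) :
    HasFDerivAt (fderiv ℝ (fun z : ℝ × Vec d => V z.1 z.2))
      (fderiv ℝ (fderiv ℝ (fun z : ℝ × Vec d => V z.1 z.2)) z) z := by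
  have h1 : ContDiff ℝ 1 (fderiv ℝ (fun z : ℝ × Vec d => V z.1 z.2)) :=
    hV.fderiv_right (by norm_num)
  exact (h1.differentiable (by norm_num) z).hasFDerivAt

/-- joint derivative of the spatial-gradient map -/
lemma hasFDerivAt_gradMap (hV : ContDiff ℝ 2 (fun z : ℝ × Vec d => V z.1 z.2)) (z : ℝ × Vec d) :
    HasFDerivAt (fun w => Kmap d (fderiv ℝ (fun z : ℝ × Vec d => V z.1 z.2) w))
      ((Kmap d).comp (fderiv ℝ (fderiv ℝ (fun z : ℝ × Vec d => V z.1 z.2)) z)) z :=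
  ((Kmap d).hasFDerivAt).comp z (hasFDerivAt_A hV z)

lemma symm_B (hV : ContDiff ℝ 2 (fun z : ℝ × Vec d => V z.1 z.2)) (z : ℝ × Vec d)
    (u v : ℝ × Vec d) :
    fderiv ℝ (fderiv ℝ (fun z : ℝ × Vec d => V z.1 z.2)) z u v
      = fderiv ℝ (fderiv ℝ (fun z : ℝ × Vec d => V z.1 z.2)) z v u :=
  (hV.contDiffAt.isSymmSndFDerivAt (by norm_num)) u v

/-- gradient of the time derivative = Kmap (B z (1,0)) -/
lemma hasGradientAt_timederiv (hV : ContDiff ℝ 2 (fun z : ℝ × Vec d => V z.1 z.2))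
    (s : ℝ) (w : Vec d) :
    HasGradientAt (fun w' => fderiv ℝ (fun z : ℝ × Vec d => V z.1 z.2) (s, w') (1, 0))
      (Kmap d (fderiv ℝ (fderiv ℝ (fun z : ℝ × Vec d => V z.1 z.2)) (s, w) (1, 0))) w := by
  set B := fderiv ℝ (fderiv ℝ (fun z : ℝ × Vec d => V z.1 z.2)) with hB
  have h1 : HasFDerivAt (fun w' => fderiv ℝ (fun z : ℝ × Vec d => V z.1 z.2) (s, w'))
      ((B (s, w)).comp (ContinuousLinearMap.inr ℝ ℝ (Vec d))) w :=
    (hasFDerivAt_A hV (s, w)).comp w (hasFDerivAt_prodMk_right s w)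
  have h2 : HasFDerivAt (fun w' => fderiv ℝ (fun z : ℝ × Vec d => V z.1 z.2) (s, w') (1, 0))
      ((ContinuousLinearMap.apply ℝ ℝ ((1:ℝ), (0:Vec d))).comp
        ((B (s, w)).comp (ContinuousLinearMap.inr ℝ ℝ (Vec d)))) w :=
    ((ContinuousLinearMap.apply ℝ ℝ ((1:ℝ), (0:Vec d))).hasFDerivAt).comp w h1
  rw [hasGradientAt_iff_hasFDerivAt, toDual_Kmap]
  refine h2.congr_fderiv ?_
  ext v : 1
  simp only [ContinuousLinearMap.coe_comp', Function.comp_apply,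
    ContinuousLinearMap.inr_apply, ContinuousLinearMap.apply_apply]
  exact (symm_B hV (s, w) (1, 0) (0, v)).symm

/-- time derivative of the spatial gradient = Kmap (B z (1,0)) -/
lemma hasDerivAt_gradSlice (hV : ContDiff ℝ 2 (fun z : ℝ × Vec d => V z.1 z.2))
    (s : ℝ) (w : Vec d) :
    HasDerivAt (fun r => Kmap d (fderiv ℝ (fun z : ℝ × Vec d => V z.1 z.2) (r, w)))
      (Kmap d (fderiv ℝ (fderiv ℝ (fun z : ℝ × Vec d => V z.1 z.2)) (s, w) (1, 0))) s := by
  have := (hasFDerivAt_gradMap hV (s, w)).comp_hasDerivAt s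
    ((hasDerivAt_id s).prodMk (hasDerivAt_const s w))
  simpa [Function.comp_def] using this

end SliceLemmas

set_option maxHeartbeats 1000000 in
lemma key_deriv (d : ℕ) (Vq Vp : ℝ → Vec d → ℝ)
    (hVq : ContDiff ℝ 2 (fun z : ℝ × Vec d => Vq z.1 z.2))
    (hVp : ContDiff ℝ 2 (fun z : ℝ × Vec d => Vp z.1 z.2))
    (t : ℝ) (q p : Vec d) :
    HasDerivAt (fun s => layerP Vp s (layerQ Vq s (q, p)))
      (JgradH
        (fun y : Phase d =>
          deriv (fun s => Vp s y.2) t +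
          deriv (fun s => Vq s (y.1 - (gradient (Vp t) y.2 - gradient (Vp 0) y.2))) t)
        (layerP Vp t (layerQ Vq t (q, p)))) t := by
  set Aq := fderiv ℝ (fun z : ℝ × Vec d => Vq z.1 z.2) with hAq
  set Ap := fderiv ℝ (fun z : ℝ × Vec d => Vp z.1 z.2) with hAp
  set Bq := fderiv ℝ Aq with hBq
  set Bp := fderiv ℝ Ap with hBp
  -- folded versions of the slice lemmas
  have gq : ∀ (s : ℝ) (w : Vec d), gradient (Vq s) w = Kmap d (Aq (s, w)) := by
    intro s w; rw [hAq]; exact grad_slice_eq hVq s w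
  have gp : ∀ (s : ℝ) (w : Vec d), gradient (Vp s) w = Kmap d (Ap (s, w)) := by
    intro s w; rw [hAp]; exact grad_slice_eq hVp s w
  have dq : ∀ (s : ℝ) (w : Vec d), deriv (fun r => Vq r w) s = Aq (s, w) (1, 0) := by
    intro s w; rw [hAq]; exact deriv_slice_eq hVq s w
  have dp : ∀ (s : ℝ) (w : Vec d), deriv (fun r => Vp r w) s = Ap (s, w) (1, 0) := by
    intro s w; rw [hAp]; exact deriv_slice_eq hVp s w
  -- the curve of momenta
  set P : ℝ → Vec d := fun s => p - (Kmap d (Aq (s, q)) - Kmap d (Aq (0, q))) with hP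
  set mq : Vec d := Kmap d (Bq (t, q) (1, 0)) with hmq
  set dh : Vec d := Kmap d (Ap (t, P t)) - Kmap d (Ap (0, P t)) with hdh
  -- the composed flow in explicit form
  have hfun : (fun s => layerP Vp s (layerQ Vq s (q, p))) =
      fun s => (q + (Kmap d (Ap (s, P s)) - Kmap d (Ap (0, P s))), P s) := by
    funext s
    simp only [layerQ, layerP, gq, gp, hP]
  -- derivative of P
  have hP' : HasDerivAt P (-mq) t := by
    rw [hP, hmq, hBq, hAq]
    exact ((hasDerivAt_gradSlice hVq t q).sub_const _).const_sub p
  -- derivative of the first component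
  have h4 : HasDerivAt (fun s => Kmap d (Ap (s, P s)))
      (Kmap d (Bp (t, P t) (1, -mq))) t := by
    have hu1 : HasDerivAt (fun s => ((s : ℝ), P s)) ((1 : ℝ), -mq) t :=
      (hasDerivAt_id t).prodMk hP'
    have hg : HasFDerivAt (fun w : ℝ × Vec d => Kmap d (Ap w))
        ((Kmap d).comp (Bp (t, P t))) (t, P t) := by
      rw [hAp, hBp]; exact hasFDerivAt_gradMap hVp (t, P t)
    simpa [Function.comp_def] using hg.comp_hasDerivAt t hu1
  have h5 : HasDerivAt (fun s => Kmap d (Ap (0, P s)))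
      (Kmap d (Bp (0, P t) (0, -mq))) t := by
    have hu0 : HasDerivAt (fun s => ((0 : ℝ), P s)) ((0 : ℝ), -mq) t :=
      (hasDerivAt_const t (0 : ℝ)).prodMk hP'
    have hg : HasFDerivAt (fun w : ℝ × Vec d => Kmap d (Ap w))
        ((Kmap d).comp (Bp (0, P t))) ((0 : ℝ), P t) := by
      rw [hAp, hBp]; exact hasFDerivAt_gradMap hVp (0, P t)
    simpa [Function.comp_def] using hg.comp_hasDerivAt t hu0
  have hDer : HasDerivAt
      (fun s => (q + (Kmap d (Ap (s, P s)) - Kmap d (Ap (0, P s))), P s))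
      (Kmap d (Bp (t, P t) (1, -mq)) - Kmap d (Bp (0, P t) (0, -mq)), -mq) t :=
    ((h4.sub h5).const_add q).prodMk hP'
  rw [hfun]
  have hyt : layerP Vp t (layerQ Vq t (q, p)) = (q + dh, P t) := by
    rw [hdh]; exact congrFun hfun t
  rw [hyt]
  -- prerequisite gradient facts
  have g0 : HasGradientAt (fun w : Vec d => Aq (t, w) (1, 0)) mq q := by
    rw [hmq, hBq, hAq]; exact hasGradientAt_timederiv hVq t q
  -- gradQ computation
  have g3 : HasGradientAt (fun y1 : Vec d => deriv (fun s => Vp s (P t)) t +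
      deriv (fun s => Vq s (y1 - (gradient (Vp t) (P t) - gradient (Vp 0) (P t)))) t)
      mq (q + dh) := by
    have funeq1 : (fun y1 : Vec d => deriv (fun s => Vp s (P t)) t +
        deriv (fun s => Vq s (y1 - (gradient (Vp t) (P t) - gradient (Vp 0) (P t)))) t)
        = fun y1 : Vec d => deriv (fun s => Vp s (P t)) t + Aq (t, y1 - dh) (1, 0) := by
      funext y1
      rw [gp t (P t), gp 0 (P t), ← hdh, dq t (y1 - dh)]
    rw [funeq1]
    have g1 : HasFDerivAt (fun y1 : Vec d => Aq (t, y1 - dh) (1, 0))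
        (InnerProductSpace.toDual ℝ (Vec d) mq) (q + dh) := by
      have gtr : HasFDerivAt (fun y1 : Vec d => y1 - dh)
          (ContinuousLinearMap.id ℝ (Vec d)) (q + dh) := (hasFDerivAt_id _).sub_const _
      have g0' : HasFDerivAt (fun w : Vec d => Aq (t, w) (1, 0))
          (InnerProductSpace.toDual ℝ (Vec d) mq) ((fun y1 : Vec d => y1 - dh) (q + dh)) := by
        simpa [add_sub_cancel_right] using g0.hasFDerivAt
      simpa [Function.comp_def] using g0'.comp (q + dh) gtr
    rw [hasGradientAt_iff_hasFDerivAt]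
    simpa using g1.const_add (deriv (fun s => Vp s (P t)) t)
  have hGQeq : gradQ (fun y : Phase d => deriv (fun s => Vp s y.2) t +
      deriv (fun s => Vq s (y.1 - (gradient (Vp t) y.2 - gradient (Vp 0) y.2))) t)
      (q + dh, P t) = mq := by
    simp only [gradQ]; exact g3.gradient
  -- gradP computation
  set N : Vec d →L[ℝ] Vec d :=
      ((Kmap d).comp (Bp (t, P t))).comp (ContinuousLinearMap.inr ℝ ℝ (Vec d)) -
      ((Kmap d).comp (Bp (0, P t))).comp (ContinuousLinearMap.inr ℝ ℝ (Vec d)) with hN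
  have a1 : HasFDerivAt (fun y2 : Vec d => Kmap d (Ap (t, y2)))
      (((Kmap d).comp (Bp (t, P t))).comp (ContinuousLinearMap.inr ℝ ℝ (Vec d))) (P t) := by
    have hg : HasFDerivAt (fun w : ℝ × Vec d => Kmap d (Ap w))
        ((Kmap d).comp (Bp (t, P t))) (t, P t) := by
      rw [hAp, hBp]; exact hasFDerivAt_gradMap hVp (t, P t)
    exact hg.comp (P t) (hasFDerivAt_prodMk_right t (P t))
  have a0 : HasFDerivAt (fun y2 : Vec d => Kmap d (Ap (0, y2)))
      (((Kmap d).comp (Bp (0, P t))).comp (ContinuousLinearMap.inr ℝ ℝ (Vec d))) (P t) := by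
    have hg : HasFDerivAt (fun w : ℝ × Vec d => Kmap d (Ap w))
        ((Kmap d).comp (Bp (0, P t))) ((0 : ℝ), P t) := by
      rw [hAp, hBp]; exact hasFDerivAt_gradMap hVp ((0 : ℝ), P t)
    exact hg.comp (P t) (hasFDerivAt_prodMk_right (0 : ℝ) (P t))
  have hm : HasFDerivAt
      (fun y2 : Vec d => (q + dh) - (Kmap d (Ap (t, y2)) - Kmap d (Ap (0, y2))))
      (-N) (P t) := by
    rw [hN]; exact (a1.sub a0).const_sub (q + dh)
  have gcomp : HasFDerivAt
      (fun y2 : Vec d => Aq (t, (q + dh) - (Kmap d (Ap (t, y2)) - Kmap d (Ap (0, y2)))) (1, 0))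
      ((InnerProductSpace.toDual ℝ (Vec d) mq).comp (-N)) (P t) := by
    have gout : HasFDerivAt (fun w : Vec d => Aq (t, w) (1, 0))
        (InnerProductSpace.toDual ℝ (Vec d) mq)
        ((q + dh) - (Kmap d (Ap (t, P t)) - Kmap d (Ap (0, P t)))) := by
      rw [← hdh, add_sub_cancel_right]
      exact g0.hasFDerivAt
    exact gout.comp (P t) hm
  have claim : (InnerProductSpace.toDual ℝ (Vec d) mq).comp (-N) =
      InnerProductSpace.toDual ℝ (Vec d)
        (-(Kmap d (Bp (t, P t) (0, mq)) - Kmap d (Bp (0, P t) (0, mq)))) := by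
    ext v : 1
    have s1 : Bp (t, P t) ((0 : ℝ), v) ((0 : ℝ), mq) = Bp (t, P t) ((0 : ℝ), mq) ((0 : ℝ), v) := by
      rw [hBp, hAp]; exact symm_B hVp _ _ _
    have s2 : Bp ((0 : ℝ), P t) ((0 : ℝ), v) ((0 : ℝ), mq)
        = Bp ((0 : ℝ), P t) ((0 : ℝ), mq) ((0 : ℝ), v) := by
      rw [hBp, hAp]; exact symm_B hVp _ _ _
    simp only [hN, ContinuousLinearMap.coe_comp', Function.comp_apply,
      ContinuousLinearMap.neg_apply, ContinuousLinearMap.sub_apply,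
      ContinuousLinearMap.inr_apply, InnerProductSpace.toDual_apply_apply,
      inner_neg_right, inner_sub_right, inner_neg_left, inner_sub_left, inner_Kmap,
      real_inner_comm mq]
    rw [real_inner_comm _ mq, real_inner_comm _ mq, inner_Kmap, inner_Kmap, s1, s2]
  have gp1 : HasGradientAt (fun y2 : Vec d => Ap (t, y2) (1, 0))
      (Kmap d (Bp (t, P t) (1, 0))) (P t) := by
    rw [hBp, hAp]; exact hasGradientAt_timederiv hVp t (P t)
  have g4 : HasGradientAt (fun y2 : Vec d => deriv (fun s => Vp s y2) t +
      deriv (fun s => Vq s ((q + dh) - (gradient (Vp t) y2 - gradient (Vp 0) y2))) t)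
      (Kmap d (Bp (t, P t) (1, 0)) +
        -(Kmap d (Bp (t, P t) (0, mq)) - Kmap d (Bp (0, P t) (0, mq)))) (P t) := by
    have funeq2 : (fun y2 : Vec d => deriv (fun s => Vp s y2) t +
        deriv (fun s => Vq s ((q + dh) - (gradient (Vp t) y2 - gradient (Vp 0) y2))) t)
        = fun y2 : Vec d => Ap (t, y2) (1, 0) +
            Aq (t, (q + dh) - (Kmap d (Ap (t, y2)) - Kmap d (Ap (0, y2)))) (1, 0) := by
      funext y2
      rw [dp t y2, gp t y2, gp 0 y2, dq t _]
    rw [funeq2, hasGradientAt_iff_hasFDerivAt, map_add]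
    exact gp1.hasFDerivAt.add (claim ▸ gcomp)
  have hGPeq : gradP (fun y : Phase d => deriv (fun s => Vp s y.2) t +
      deriv (fun s => Vq s (y.1 - (gradient (Vp t) y.2 - gradient (Vp 0) y.2))) t)
      (q + dh, P t) =
      Kmap d (Bp (t, P t) (1, 0)) +
        -(Kmap d (Bp (t, P t) (0, mq)) - Kmap d (Bp (0, P t) (0, mq))) := by
    simp only [gradP]; exact g4.gradient
  -- assemble
  have final : JgradH (fun y : Phase d => deriv (fun s => Vp s y.2) t +
      deriv (fun s => Vq s (y.1 - (gradient (Vp t) y.2 - gradient (Vp 0) y.2))) t)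
      (q + dh, P t) =
      (Kmap d (Bp (t, P t) (1, -mq)) - Kmap d (Bp (0, P t) (0, -mq)), -mq) := by
    rw [JgradH, hGPeq, hGQeq, Prod.mk.injEq]
    refine ⟨?_, rfl⟩
    have e1 : ((1 : ℝ), -mq) = (((1 : ℝ), (0 : Vec d)) : ℝ × Vec d) - ((0 : ℝ), mq) := by
      rw [Prod.mk_sub_mk]; norm_num
    have e2 : ((0 : ℝ), -mq) = -(((0 : ℝ), mq) : ℝ × Vec d) := by
      rw [Prod.neg_mk, neg_zero]
    rw [e1, e2, map_sub, map_neg, map_sub, map_neg]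
    abel
  rw [final]
  exact hDer

/-- **Hamiltonian of a SympFlow pair layer.** The composition `ψₜ = φ_{p,t} ∘ φ_{q,t}`
satisfies `ψ₀ = id` and `∂ₜ ψₜ(x) = J ∇ₓ H(t, ψₜ(x))`, where
`H(t,(q,p)) = ∂ₜ V_p(t,p) + ∂ₜ V_q(t, q − (∇_p V_p(t,p) − ∇_p V_p(0,p)))`. -/
theorem pair_layer_hamiltonian
    (d : ℕ) (Vq Vp : ℝ → Vec d → ℝ)
    (hVq : ContDiff ℝ 2 (fun z : ℝ × Vec d => Vq z.1 z.2))
    (hVp : ContDiff ℝ 2 (fun z : ℝ × Vec d => Vp z.1 z.2)) :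
    (∀ x : Phase d, layerP Vp 0 (layerQ Vq 0 x) = x) ∧
    (∀ (t : ℝ) (x : Phase d),
      HasDerivAt (fun s => layerP Vp s (layerQ Vq s x))
        (JgradH
          (fun y : Phase d =>
            deriv (fun s => Vp s y.2) t +
            deriv (fun s => Vq s (y.1 - (gradient (Vp t) y.2 - gradient (Vp 0) y.2))) t)
          (layerP Vp t (layerQ Vq t x))) t) := by
  constructor
  · intro x
    simp [layerQ, layerP]
  · intro t x
    simpa using key_deriv d Vq Vp hVq hVp t x.1 x.2
end
end

section
/- Lie–Trotter splitting error for separable time-dependent Hamiltonians: Let Ω ⊂ ℝ^{2d} be compact, and let V_q, V_p : ℝ × ℝ^d → ℝ be twice continuously differentiable with bounded first and second derivatives on a compact neighborhood of the relevant trajectories. Set H₁(s,(q,p)) = V_p(s,p), H₂(s,(q,p)) = V_q(s,q), and H = H₁ + H₂. Then there exists C > 0 such that for every t₀ ≥ 0, every step size h ∈ (0,1], and every x ∈ Ω, ‖φ_{H}^{t₀→t₀+h}(x) − (φ_{H₁}^{t₀→t₀+h} ∘ φ_{H₂}^{t₀→t₀+h})(x)‖_∞ ≤ C h², where φ_{G}^{t₀→t₀+h}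 denotes the flow map of z'(s) = J∇_x G(s, z(s)) from time t₀ to time t₀ + h. -/
noncomputable section

/-- Supremum norm on `ℝ^{2d}`: the max of the absolute values of all `2d` coordinates. -/
def supNorm {d : ℕ} (x : Phase d) : ℝ :=
  max ‖(WithLp.equiv 2 (Fin d → ℝ)) x.1‖ ‖(WithLp.equiv 2 (Fin d → ℝ)) x.2‖

namespace LTAux

variable {d : ℕ}

lemma norm_inr_le : ‖ContinuousLinearMap.inr ℝ ℝ (Vec d)‖ ≤ 1 := by
  refine ContinuousLinearMap.opNorm_le_bound _ zero_le_one fun v => ?_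
  simp [Prod.norm_def]

def φmap (d : ℕ) : ((ℝ × Vec d) →L[ℝ] ℝ) →L[ℝ] Vec d :=
  LinearMap.mkContinuous
    { toFun := fun L => (InnerProductSpace.toDual ℝ (Vec d)).symm
        (L.comp (ContinuousLinearMap.inr ℝ ℝ (Vec d)))
      map_add' := by intros; simp [ContinuousLinearMap.add_comp]
      map_smul' := by intros; simp [ContinuousLinearMap.smul_comp] }
    1 (fun L => by
      simp only [LinearMap.coe_mk, AddHom.coe_mk, LinearIsometryEquiv.norm_map, one_mul]
      calc ‖L.comp (ContinuousLinearMap.inr ℝ ℝ (Vec d))‖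
          ≤ ‖L‖ * ‖(ContinuousLinearMap.inr ℝ ℝ (Vec d))‖ :=
            ContinuousLinearMap.opNorm_comp_le _ _
        _ ≤ ‖L‖ * 1 := by gcongr; exact norm_inr_le
        _ = ‖L‖ := mul_one _)

lemma φmap_apply (L : (ℝ × Vec d) →L[ℝ] ℝ) :
    φmap d L = (InnerProductSpace.toDual ℝ (Vec d)).symm
      (L.comp (ContinuousLinearMap.inr ℝ ℝ (Vec d))) := rfl

lemma norm_φmap_le (L : (ℝ × Vec d) →L[ℝ] ℝ) : ‖φmap d L‖ ≤ ‖L‖ := by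
  rw [φmap_apply, LinearIsometryEquiv.norm_map]
  calc ‖L.comp (ContinuousLinearMap.inr ℝ ℝ (Vec d))‖
      ≤ ‖L‖ * ‖(ContinuousLinearMap.inr ℝ ℝ (Vec d))‖ :=
        ContinuousLinearMap.opNorm_comp_le _ _
    _ ≤ ‖L‖ * 1 := by gcongr; exact norm_inr_le
    _ = ‖L‖ := mul_one _

def G (F : ℝ × Vec d → ℝ) (z : ℝ × Vec d) : Vec d := φmap d (fderiv ℝ F z)

lemma gradient_slice {F : ℝ × Vec d → ℝ} (hF : ContDiff ℝ 2 F) (s : ℝ) (p : Vec d) :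
    gradient (fun p => F (s, p)) p = G F (s, p) := by
  unfold gradient G
  rw [φmap_apply]
  congr 1
  have h1 : HasFDerivAt (fun p : Vec d => F (s, p))
      ((fderiv ℝ F (s, p)).comp (ContinuousLinearMap.inr ℝ ℝ (Vec d))) p :=
    (hF.differentiable (by norm_num) (s, p)).hasFDerivAt.comp p (hasFDerivAt_prodMk_right s p)
  exact h1.fderiv

lemma norm_G_le {F : ℝ × Vec d → ℝ} {z : ℝ × Vec d} {B : ℝ} (hB : ‖fderiv ℝ F z‖ ≤ B) :
    ‖G F z‖ ≤ B := le_trans (norm_φmap_le _) hB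

lemma hasDerivAt_G {F : ℝ × Vec d → ℝ} (hF : ContDiff ℝ 2 F)
    {ζ : ℝ → ℝ × Vec d} {ζ' : ℝ × Vec d} {s : ℝ} (hζ : HasDerivAt ζ ζ' s) :
    HasDerivAt (fun τ => G F (ζ τ)) (φmap d (fderiv ℝ (fderiv ℝ F) (ζ s) ζ')) s := by
  have hF' : ContDiff ℝ 1 (fderiv ℝ F) := hF.fderiv_right (by norm_num)
  have h1 : HasDerivAt (fun τ => fderiv ℝ F (ζ τ)) (fderiv ℝ (fderiv ℝ F) (ζ s) ζ') s :=
    ((hF'.differentiable (by norm_num) (ζ s)).hasFDerivAt).comp_hasDerivAt s hζ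
  exact ((φmap d).hasFDerivAt).comp_hasDerivAt s h1

lemma norm_deriv_G_le {F : ℝ × Vec d → ℝ} {z : ℝ × Vec d} {ζ' : ℝ × Vec d} {B B' : ℝ}
    (hB : ‖fderiv ℝ (fderiv ℝ F) z‖ ≤ B) (hζ' : ‖ζ'‖ ≤ B') (hB0 : 0 ≤ B) :
    ‖φmap d (fderiv ℝ (fderiv ℝ F) z ζ')‖ ≤ B * B' := by
  refine le_trans (norm_φmap_le _) ?_
  calc ‖fderiv ℝ (fderiv ℝ F) z ζ'‖ ≤ ‖fderiv ℝ (fderiv ℝ F) z‖ * ‖ζ'‖ :=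
        ContinuousLinearMap.le_opNorm _ _
    _ ≤ B * B' := mul_le_mul hB hζ' (norm_nonneg _) hB0

lemma norm_one_prod_le {v : Vec d} {B : ℝ} (hv : ‖v‖ ≤ B) (hB : 0 ≤ B) :
    ‖(((1:ℝ), v) : ℝ × Vec d)‖ ≤ 1 + B := by
  rw [Prod.norm_def]
  simp only [norm_one]
  exact max_le (by linarith) (by linarith)

lemma norm_zero_prod_le {v : Vec d} {B : ℝ} (hv : ‖v‖ ≤ B) :
    ‖(((0:ℝ), v) : ℝ × Vec d)‖ ≤ B := by
  rw [Prod.norm_def]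
  simpa using hv

lemma gradient_add_const {f : Vec d → ℝ} {c : ℝ} {p : Vec d} :
    gradient (fun y => f y + c) p = gradient f p := by
  unfold gradient; rw [fderiv_add_const]

lemma gradient_const_add {f : Vec d → ℝ} {c : ℝ} {p : Vec d} :
    gradient (fun y => c + f y) p = gradient f p := by
  unfold gradient; rw [fderiv_const_add]

lemma equiv_norm_le (v : Vec d) : ‖(WithLp.equiv 2 (Fin d → ℝ)) v‖ ≤ ‖v‖ := by
  refine (pi_norm_le_iff_of_nonneg (norm_nonneg v)).2 fun i => ?_
  rw [EuclideanSpace.norm_eq]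
  have h2 : ‖(WithLp.equiv 2 (Fin d → ℝ)) v i‖ = ‖v i‖ := rfl
  rw [h2, show ‖v i‖ = Real.sqrt (‖v i‖^2) by rw [Real.sqrt_sq (norm_nonneg _)]]
  apply Real.sqrt_le_sqrt
  exact Finset.single_le_sum (f := fun j => ‖v j‖^2) (fun j _ => sq_nonneg _) (Finset.mem_univ i)

lemma arith2 {u v : ℝ} (hu : 0 ≤ u) (hv : 0 < v) :
    (2*(u*(1+u))*v)*v ≤ (3*u^2 + 2*u + 1)*v^2 := by nlinarith [sq_nonneg v]

lemma arith1 {u v : ℝ} (hu : 0 ≤ u) (hv : 0 < v) :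
    ((2*(u*(1+u)) + u*u)*v)*v ≤ (3*u^2 + 2*u + 1)*v^2 := by nlinarith [sq_nonneg v]

end LTAux

open LTAux Set in
/-- **Lie–Trotter splitting error for separable time-dependent Hamiltonians.**
With `H₁(s,(q,p)) = V_p(s,p)`, `H₂(s,(q,p)) = V_q(s,q)`, `H = H₁ + H₂`, where `V_q, V_p` are
`C²` with first and second derivatives bounded (by `B`) on a compact neighborhood `K` of the
relevant trajectories, the one-step splitting error satisfies
`‖φ_H^{t₀→t₀+h}(x) − (φ_{H₁}^{t₀→t₀+h} ∘ φ_{H₂}^{t₀→t₀+h})(x)‖_∞ ≤ C h²`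
uniformly in `t₀ ≥ 0`, `h ∈ (0,1]` and `x ∈ Ω`. -/
theorem lie_trotter_splitting_error
    (d : ℕ) (Ω : Set (Phase d)) (hΩ : IsCompact Ω)
    (Vq Vp : ℝ → Vec d → ℝ)
    (hVq : ContDiff ℝ 2 (fun z : ℝ × Vec d => Vq z.1 z.2))
    (hVp : ContDiff ℝ 2 (fun z : ℝ × Vec d => Vp z.1 z.2))
    (K : Set (Phase d)) (hK : IsCompact K) (hΩK : Ω ⊆ K)
    (B : ℝ)
    (hBq : ∀ s ≥ (0:ℝ), ∀ x ∈ K,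
      ‖fderiv ℝ (fun z : ℝ × Vec d => Vq z.1 z.2) (s, x.1)‖ ≤ B ∧
      ‖fderiv ℝ (fderiv ℝ (fun z : ℝ × Vec d => Vq z.1 z.2)) (s, x.1)‖ ≤ B)
    (hBp : ∀ s ≥ (0:ℝ), ∀ x ∈ K,
      ‖fderiv ℝ (fun z : ℝ × Vec d => Vp z.1 z.2) (s, x.2)‖ ≤ B ∧
      ‖fderiv ℝ (fderiv ℝ (fun z : ℝ × Vec d => Vp z.1 z.2)) (s, x.2)‖ ≤ B)
    (ΦH Φ1 Φ2 : ℝ → ℝ → Phase d → Phase d)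
    (hΦH0 : ∀ t₀ ≥ (0:ℝ), ∀ x : Phase d, ΦH t₀ t₀ x = x)
    (hΦ10 : ∀ t₀ ≥ (0:ℝ), ∀ x : Phase d, Φ1 t₀ t₀ x = x)
    (hΦ20 : ∀ t₀ ≥ (0:ℝ), ∀ x : Phase d, Φ2 t₀ t₀ x = x)
    (hΦH : ∀ t₀ ≥ (0:ℝ), ∀ x : Phase d, ∀ s ≥ t₀,
      HasDerivAt (fun u => ΦH t₀ u x)
        (JgradH (fun y : Phase d => Vp s y.2 + Vq s y.1) (ΦH t₀ s x)) s)
    (hΦ1 : ∀ t₀ ≥ (0:ℝ), ∀ x : Phase d, ∀ s ≥ t₀,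
      HasDerivAt (fun u => Φ1 t₀ u x)
        (JgradH (fun y : Phase d => Vp s y.2) (Φ1 t₀ s x)) s)
    (hΦ2 : ∀ t₀ ≥ (0:ℝ), ∀ x : Phase d, ∀ s ≥ t₀,
      HasDerivAt (fun u => Φ2 t₀ u x)
        (JgradH (fun y : Phase d => Vq s y.1) (Φ2 t₀ s x)) s)
    (htraj : ∀ t₀ ≥ (0:ℝ), ∀ h ∈ Set.Ioc (0:ℝ) 1, ∀ x ∈ Ω, ∀ s ∈ Set.Icc t₀ (t₀ + h),
      ΦH t₀ s x ∈ K ∧ Φ2 t₀ s x ∈ K ∧ Φ1 t₀ s (Φ2 t₀ (t₀ + h) x) ∈ K) :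
    ∃ C > (0:ℝ), ∀ t₀ ≥ (0:ℝ), ∀ h ∈ Set.Ioc (0:ℝ) 1, ∀ x ∈ Ω,
      supNorm (ΦH t₀ (t₀ + h) x - Φ1 t₀ (t₀ + h) (Φ2 t₀ (t₀ + h) x)) ≤ C * h ^ 2 := by
  set Fq : ℝ × Vec d → ℝ := fun z => Vq z.1 z.2 with hFqdef
  set Fp : ℝ × Vec d → ℝ := fun z => Vp z.1 z.2 with hFpdef
  refine ⟨3*B^2 + 2*B + 1, by nlinarith [sq_nonneg (3*B + 1)], ?_⟩
  intro t₀ ht₀ h hh x hx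
  obtain ⟨hh0, hh1⟩ := hh
  set T := t₀ + h with hTdef
  have htT : t₀ ≤ T := by simp [hTdef]; linarith
  have hTmem : T ∈ Icc t₀ T := ⟨htT, le_refl T⟩
  have hB0 : 0 ≤ B := le_trans (norm_nonneg _) (hBq t₀ ht₀ x (hΩK hx)).1
  set a : ℝ → Phase d := fun s => ΦH t₀ s x with hadef
  set e : ℝ → Phase d := fun s => Φ2 t₀ s x with hedef
  set c : Phase d := e T with hcdef
  set b : ℝ → Phase d := fun s => Φ1 t₀ s c with hbdef
  have hmem : ∀ s ∈ Icc t₀ T, a s ∈ K ∧ e s ∈ K ∧ b s ∈ K :=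
    fun s hs => htraj t₀ ht₀ h ⟨hh0, hh1⟩ x hx s hs
  have hs0 : ∀ s ∈ Icc t₀ T, (0:ℝ) ≤ s := fun s hs => le_trans ht₀ hs.1
  -- rewrite the three vector fields in terms of `G`
  have hJH : ∀ (s : ℝ) (y : Phase d),
      JgradH (fun y : Phase d => Vp s y.2 + Vq s y.1) y = (G Fp (s, y.2), -G Fq (s, y.1)) := by
    intro s y
    unfold JgradH gradP gradQ
    refine Prod.ext ?_ ?_
    · exact (gradient_add_const (f := fun p => Vp s p) (c := Vq s y.1)).trans
        (gradient_slice hVp s y.2)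
    · simp only [Prod.snd]
      congr 1
      exact (gradient_const_add (f := fun q => Vq s q) (c := Vp s y.2)).trans
        (gradient_slice hVq s y.1)
  have hJ1 : ∀ (s : ℝ) (y : Phase d),
      JgradH (fun y : Phase d => Vp s y.2) y = (G Fp (s, y.2), 0) := by
    intro s y
    unfold JgradH gradP gradQ
    refine Prod.ext ?_ ?_
    · exact gradient_slice hVp s y.2
    · show -gradient (fun q : Vec d => Vp s y.2) y.1 = (0:Vec d)
      rw [show gradient (fun q : Vec d => Vp s y.2) y.1 = 0 from gradient_const _ _, neg_zero]
  have hJ2 : ∀ (s : ℝ) (y : Phase d),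
      JgradH (fun y : Phase d => Vq s y.1) y = (0, -G Fq (s, y.1)) := by
    intro s y
    unfold JgradH gradP gradQ
    refine Prod.ext ?_ ?_
    · show gradient (fun p : Vec d => Vq s y.1) y.2 = (0 : Vec d)
      exact gradient_const _ _
    · show -gradient (fun q : Vec d => Vq s q) y.1 = -G Fq (s, y.1)
      rw [gradient_slice hVq s y.1]
  -- component extraction
  have fstd : ∀ {f : ℝ → Phase d} {f' : Phase d} {s : ℝ},
      HasDerivAt f f' s → HasDerivAt (fun τ => (f τ).1) f'.1 s := fun hf =>
    (ContinuousLinearMap.fst ℝ (Vec d) (Vec d)).hasFDerivAt.comp_hasDerivAt _ hf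
  have sndd : ∀ {f : ℝ → Phase d} {f' : Phase d} {s : ℝ},
      HasDerivAt f f' s → HasDerivAt (fun τ => (f τ).2) f'.2 s := fun hf =>
    (ContinuousLinearMap.snd ℝ (Vec d) (Vec d)).hasFDerivAt.comp_hasDerivAt _ hf
  -- derivatives of the three trajectories
  have hA : ∀ s ∈ Icc t₀ T, HasDerivAt a (G Fp (s, (a s).2), -G Fq (s, (a s).1)) s := by
    intro s hs
    have := hΦH t₀ ht₀ x s hs.1
    rwa [hJH] at this
  have hE : ∀ s ∈ Icc t₀ T, HasDerivAt e (0, -G Fq (s, (e s).1)) s := by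
    intro s hs
    have := hΦ2 t₀ ht₀ x s hs.1
    rwa [hJ2] at this
  have hBd : ∀ s ∈ Icc t₀ T, HasDerivAt b (G Fp (s, (b s).2), 0) s := by
    intro s hs
    have := hΦ1 t₀ ht₀ c s hs.1
    rwa [hJ1] at this
  -- initial conditions
  have ha0 : a t₀ = x := hΦH0 t₀ ht₀ x
  have he0 : e t₀ = x := hΦ20 t₀ ht₀ x
  have hb0 : b t₀ = c := hΦ10 t₀ ht₀ c
  -- first-derivative bounds
  have hGq : ∀ s ∈ Icc t₀ T, ∀ y ∈ K, ‖G Fq (s, (y : Phase d).1)‖ ≤ B :=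
    fun s hs y hy => norm_G_le (hBq s (hs0 s hs) y hy).1
  have hGp : ∀ s ∈ Icc t₀ T, ∀ y ∈ K, ‖G Fp (s, (y : Phase d).2)‖ ≤ B :=
    fun s hs y hy => norm_G_le (hBp s (hs0 s hs) y hy).1
  -- `e` has constant first component, `b` constant second component
  have he1 : ∀ s ∈ Icc t₀ T, (e s).1 = x.1 := by
    intro s hs
    have key := norm_image_sub_le_of_norm_deriv_le_segment'
      (f := fun τ => (e τ).1) (f' := fun _ => (0 : Vec d)) (C := 0) (a := t₀) (b := T)
      (fun τ hτ => (fstd (hE τ hτ)).hasDerivWithinAt)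
      (fun τ _ => by simp) s hs
    rw [zero_mul] at key
    have h0 : (e s).1 - (e t₀).1 = 0 := norm_le_zero_iff.1 key
    rw [he0] at h0
    exact sub_eq_zero.1 h0
  have hb2 : ∀ s ∈ Icc t₀ T, (b s).2 = c.2 := by
    intro s hs
    have key := norm_image_sub_le_of_norm_deriv_le_segment'
      (f := fun τ => (b τ).2) (f' := fun _ => (0 : Vec d)) (C := 0) (a := t₀) (b := T)
      (fun τ hτ => (sndd (hBd τ hτ)).hasDerivWithinAt)
      (fun τ _ => by simp) s hs
    rw [zero_mul] at key
    have h0 : (b s).2 - (b t₀).2 = 0 := norm_le_zero_iff.1 key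
    rw [hb0] at h0
    exact sub_eq_zero.1 h0
  have hc1 : c.1 = x.1 := he1 T hTmem
  have hMnn : (0:ℝ) ≤ B * (1 + B) := mul_nonneg hB0 (by linarith)
  -- second-derivative-based estimate along `a` (q-gradient)
  have hr : ∀ s ∈ Icc t₀ T, ‖G Fq (s, (a s).1) - G Fq (s, x.1)‖ ≤ 2*(B*(1+B)) * h := by
    intro s hs
    have key := norm_image_sub_le_of_norm_deriv_le_segment'
      (f := fun τ => G Fq (τ, (a τ).1) - G Fq (τ, x.1))
      (f' := fun τ => φmap d (fderiv ℝ (fderiv ℝ Fq) (τ, (a τ).1) (1, G Fp (τ, (a τ).2)))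
          - φmap d (fderiv ℝ (fderiv ℝ Fq) (τ, x.1) ((1 : ℝ), (0 : Vec d))))
      (C := 2*(B*(1+B))) (a := t₀) (b := T)
      (fun τ hτ => by
        have h1 := hasDerivAt_G (d := d) hVq
          ((hasDerivAt_id τ).prodMk (fstd (hA τ hτ)))
        have h2 := hasDerivAt_G (d := d) hVq
          ((hasDerivAt_id τ).prodMk (hasDerivAt_const τ x.1))
        exact (h1.sub h2).hasDerivWithinAt)
      (fun τ hτ => by
        have hτ' : τ ∈ Icc t₀ T := Ico_subset_Icc_self hτ
        have hτ0 : (0:ℝ) ≤ τ := hs0 τ hτ'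
        have n1 : ‖φmap d (fderiv ℝ (fderiv ℝ Fq) (τ, (a τ).1) (1, G Fp (τ, (a τ).2)))‖
            ≤ B * (1 + B) :=
          norm_deriv_G_le (hBq τ hτ0 (a τ) (hmem τ hτ').1).2
            (norm_one_prod_le (hGp τ hτ' (a τ) (hmem τ hτ').1) hB0) hB0
        have n2 : ‖φmap d (fderiv ℝ (fderiv ℝ Fq) (τ, x.1) ((1:ℝ), (0 : Vec d)))‖
            ≤ B * (1 + B) :=
          norm_deriv_G_le (hBq τ hτ0 x (hΩK hx)).2
            (norm_one_prod_le (by simp [hB0]) hB0) hB0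
        calc ‖_ - _‖ ≤ _ + _ := norm_sub_le _ _
          _ ≤ B*(1+B) + B*(1+B) := add_le_add n1 n2
          _ = 2*(B*(1+B)) := by ring)
      s hs
    have hzz : G Fq (t₀, (a t₀).1) = G Fq (t₀, x.1) := by rw [ha0]
    have hst : s - t₀ ≤ h := by
      have := hs.2; simp only [hTdef] at this; linarith
    calc ‖G Fq (s, (a s).1) - G Fq (s, x.1)‖
        = ‖(G Fq (s, (a s).1) - G Fq (s, x.1))
            - (G Fq (t₀, (a t₀).1) - G Fq (t₀, x.1))‖ := by rw [hzz, sub_self, sub_zero]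
      _ ≤ 2*(B*(1+B)) * (s - t₀) := key
      _ ≤ 2*(B*(1+B)) * h := mul_le_mul_of_nonneg_left hst (by linarith)
  -- second coordinate error
  have hD2 : ‖(a T).2 - (e T).2‖ ≤ (2*(B*(1+B))*h) * h := by
    have key := norm_image_sub_le_of_norm_deriv_le_segment'
      (f := fun s => (a s).2 - (e s).2)
      (f' := fun s => (-G Fq (s, (a s).1)) - (-G Fq (s, (e s).1)))
      (C := 2*(B*(1+B))*h) (a := t₀) (b := T)
      (fun s hs => ((sndd (hA s hs)).sub (sndd (hE s hs))).hasDerivWithinAt)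
      (fun s hs => by
        have hs' : s ∈ Icc t₀ T := Ico_subset_Icc_self hs
        show ‖(-G Fq (s, (a s).1)) - (-G Fq (s, (e s).1))‖ ≤ 2*(B*(1+B))*h
        rw [he1 s hs', neg_sub_neg, norm_sub_rev]
        exact hr s hs')
      T hTmem
    have hzz : (a t₀).2 = (e t₀).2 := by rw [ha0, he0]
    have hT : T - t₀ = h := by simp [hTdef]
    calc ‖(a T).2 - (e T).2‖
        = ‖((a T).2 - (e T).2) - ((a t₀).2 - (e t₀).2)‖ := by rw [hzz, sub_self, sub_zero]
      _ ≤ (2*(B*(1+B))*h) * (T - t₀) := key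
      _ = (2*(B*(1+B))*h) * h := by rw [hT]
  -- p-gradient comparison along `a` and `e`
  have hm1 : ∀ s ∈ Icc t₀ T, ‖G Fp (s, (a s).2) - G Fp (s, (e s).2)‖ ≤ 2*(B*(1+B)) * h := by
    intro s hs
    have key := norm_image_sub_le_of_norm_deriv_le_segment'
      (f := fun τ => G Fp (τ, (a τ).2) - G Fp (τ, (e τ).2))
      (f' := fun τ => φmap d (fderiv ℝ (fderiv ℝ Fp) (τ, (a τ).2) (1, -G Fq (τ, (a τ).1)))
          - φmap d (fderiv ℝ (fderiv ℝ Fp) (τ, (e τ).2) ((1 : ℝ), -G Fq (τ, (e τ).1))))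
      (C := 2*(B*(1+B))) (a := t₀) (b := T)
      (fun τ hτ => by
        have h1 := hasDerivAt_G (d := d) hVp
          ((hasDerivAt_id τ).prodMk (sndd (hA τ hτ)))
        have h2 := hasDerivAt_G (d := d) hVp
          ((hasDerivAt_id τ).prodMk (sndd (hE τ hτ)))
        exact (h1.sub h2).hasDerivWithinAt)
      (fun τ hτ => by
        have hτ' : τ ∈ Icc t₀ T := Ico_subset_Icc_self hτ
        have hτ0 : (0:ℝ) ≤ τ := hs0 τ hτ'
        have n1 : ‖φmap d (fderiv ℝ (fderiv ℝ Fp) (τ, (a τ).2) (1, -G Fq (τ, (a τ).1)))‖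
            ≤ B * (1 + B) :=
          norm_deriv_G_le (hBp τ hτ0 (a τ) (hmem τ hτ').1).2
            (norm_one_prod_le (by rw [norm_neg]; exact hGq τ hτ' (a τ) (hmem τ hτ').1) hB0) hB0
        have n2 : ‖φmap d (fderiv ℝ (fderiv ℝ Fp) (τ, (e τ).2) ((1:ℝ), -G Fq (τ, (e τ).1)))‖
            ≤ B * (1 + B) :=
          norm_deriv_G_le (hBp τ hτ0 (e τ) (hmem τ hτ').2.1).2
            (norm_one_prod_le (by rw [norm_neg]; exact hGq τ hτ' (e τ) (hmem τ hτ').2.1) hB0) hB0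
        calc ‖_ - _‖ ≤ _ + _ := norm_sub_le _ _
          _ ≤ B*(1+B) + B*(1+B) := add_le_add n1 n2
          _ = 2*(B*(1+B)) := by ring)
      s hs
    have hzz : G Fp (t₀, (a t₀).2) = G Fp (t₀, (e t₀).2) := by rw [ha0, he0]
    have hst : s - t₀ ≤ h := by
      have := hs.2; simp only [hTdef] at this; linarith
    calc ‖G Fp (s, (a s).2) - G Fp (s, (e s).2)‖
        = ‖(G Fp (s, (a s).2) - G Fp (s, (e s).2))
            - (G Fp (t₀, (a t₀).2) - G Fp (t₀, (e t₀).2))‖ := by rw [hzz, sub_self, sub_zero]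
      _ ≤ 2*(B*(1+B)) * (s - t₀) := key
      _ ≤ 2*(B*(1+B)) * h := mul_le_mul_of_nonneg_left hst (by linarith)
  -- frozen-time p-gradient comparison along `e`
  have hm2 : ∀ s ∈ Icc t₀ T, ‖G Fp (s, (e s).2) - G Fp (s, c.2)‖ ≤ (B*B) * h := by
    intro s hs
    have key := norm_image_sub_le_of_norm_deriv_le_segment'
      (f := fun τ => G Fp (s, (e τ).2))
      (f' := fun τ => φmap d (fderiv ℝ (fderiv ℝ Fp) (s, (e τ).2) ((0:ℝ), -G Fq (τ, (e τ).1))))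
      (C := B*B) (a := s) (b := T)
      (fun τ hτ => by
        have hτ' : τ ∈ Icc t₀ T := ⟨le_trans hs.1 hτ.1, hτ.2⟩
        exact (hasDerivAt_G (d := d) hVp
          ((hasDerivAt_const τ s).prodMk (sndd (hE τ hτ')))).hasDerivWithinAt)
      (fun τ hτ => by
        have hτ' : τ ∈ Icc t₀ T := ⟨le_trans hs.1 hτ.1, le_of_lt hτ.2⟩
        exact norm_deriv_G_le (hBp s (hs0 s hs) (e τ) (hmem τ hτ').2.1).2
          (norm_zero_prod_le (by rw [norm_neg]; exact hGq τ hτ' (e τ) (hmem τ hτ').2.1)) hB0)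
      T ⟨hs.2, le_refl T⟩
    have h1 : T - s ≤ h := by
      have := hs.1; simp only [hTdef]; linarith
    rw [norm_sub_rev]
    calc ‖G Fp (s, c.2) - G Fp (s, (e s).2)‖
        ≤ (B*B) * (T - s) := key
      _ ≤ (B*B) * h := mul_le_mul_of_nonneg_left h1 (mul_nonneg hB0 hB0)
  -- first coordinate error
  have hD1 : ‖(a T).1 - (b T).1‖ ≤ ((2*(B*(1+B)) + B*B)*h) * h := by
    have key := norm_image_sub_le_of_norm_deriv_le_segment'
      (f := fun s => (a s).1 - (b s).1)
      (f' := fun s => G Fp (s, (a s).2) - G Fp (s, (b s).2))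
      (C := (2*(B*(1+B)) + B*B)*h) (a := t₀) (b := T)
      (fun s hs => ((fstd (hA s hs)).sub (fstd (hBd s hs))).hasDerivWithinAt)
      (fun s hs => by
        have hs' : s ∈ Icc t₀ T := Ico_subset_Icc_self hs
        show ‖G Fp (s, (a s).2) - G Fp (s, (b s).2)‖ ≤ (2*(B*(1+B)) + B*B)*h
        rw [hb2 s hs']
        calc ‖G Fp (s, (a s).2) - G Fp (s, c.2)‖
            = ‖(G Fp (s, (a s).2) - G Fp (s, (e s).2)) + (G Fp (s, (e s).2) - G Fp (s, c.2))‖ := by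
              rw [sub_add_sub_cancel]
          _ ≤ ‖G Fp (s, (a s).2) - G Fp (s, (e s).2)‖ + ‖G Fp (s, (e s).2) - G Fp (s, c.2)‖ :=
              norm_add_le _ _
          _ ≤ 2*(B*(1+B))*h + (B*B)*h := add_le_add (hm1 s hs') (hm2 s hs')
          _ = (2*(B*(1+B)) + B*B)*h := by ring)
      T hTmem
    have hzz : (a t₀).1 = (b t₀).1 := by rw [ha0, hb0, hc1]
    have hT : T - t₀ = h := by simp [hTdef]
    calc ‖(a T).1 - (b T).1‖
        = ‖((a T).1 - (b T).1) - ((a t₀).1 - (b t₀).1)‖ := by rw [hzz, sub_self, sub_zero]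
      _ ≤ ((2*(B*(1+B)) + B*B)*h) * (T - t₀) := key
      _ = ((2*(B*(1+B)) + B*B)*h) * h := by rw [hT]
  have hbound1 : ‖(a T - b T).1‖ ≤ (3*B^2 + 2*B + 1) * h^2 := by
    rw [Prod.fst_sub]
    exact hD1.trans (arith1 hB0 hh0)
  have hbound2 : ‖(a T - b T).2‖ ≤ (3*B^2 + 2*B + 1) * h^2 := by
    rw [Prod.snd_sub, hb2 T hTmem, hcdef]
    exact hD2.trans (arith2 hB0 hh0)
  have hgoal : ΦH t₀ T x - Φ1 t₀ T (Φ2 t₀ T x) = a T - b T := rfl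
  rw [hgoal]
  unfold supNorm
  exact max_le ((equiv_norm_le _).trans hbound1) ((equiv_norm_le _).trans hbound2)
end
end
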